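/- Let X₁,…,X_K be i.i.d. nonnegative random variables whose common CDF satisfies F(x) = Pr{X ≤ x} ~ c·x^{d} as x → 0⁺ for constants c > 0, d > 0. Then for fixed R > 0, the HARQ-IR outage probability Pr{∏_{k=1}^K (1 + ρ̂ X_k) < 2^R} decays like ρ̂^{−Kd} as ρ̂ → ∞, i.e., −lim_{ρ̂→∞} log Pr{∏(1+ρ̂X_k) < 2^R}/log ρ̂ = K·d. -/

import Mathlib

open MeasureTheory ProbabilityTheory Set Filter

private lemma tendsto_ratio_comp (F : ℝ → ℝ) (c d t : ℝ) (ht : 0 < t)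
    (hF : Tendsto (fun x => F x / x ^ d) (nhdsWithin 0 (Ioi 0)) (nhds c)) :
    Tendsto (fun ρ => F (t / ρ) / (t / ρ) ^ d) atTop (nhds c) := by
  apply hF.comp
  apply tendsto_nhdsWithin_of_tendsto_nhds_of_eventually_within
  · exact tendsto_const_nhds.div_atTop tendsto_id
  · filter_upwards [eventually_gt_atTop (0 : ℝ)] with ρ hρ
    exact div_pos ht hρ

private lemma F_eventually_pos (F : ℝ → ℝ) (c d t : ℝ) (hc : 0 < c) (ht : 0 < t)
    (hF : Tendsto (fun x => F x / x ^ d) (nhdsWithin 0 (Ioi 0)) (nhds c)) :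
    ∀ᶠ ρ in atTop, 0 < F (t / ρ) := by
  have hg := tendsto_ratio_comp F c d t ht hF
  filter_upwards [hg.eventually (eventually_gt_nhds hc), eventually_gt_atTop (0 : ℝ)]
    with ρ hgρ hρ
  have htρ : 0 < t / ρ := div_pos ht hρ
  have hpow : (0:ℝ) < (t / ρ) ^ d := Real.rpow_pos_of_pos htρ d
  have : F (t / ρ) = (F (t / ρ) / (t / ρ) ^ d) * (t / ρ) ^ d :=
    (div_mul_cancel₀ _ hpow.ne').symm
  rw [this]
  exact mul_pos hgρ hpow

private lemma log_cdf_limit (F : ℝ → ℝ) (c d t : ℝ) (hc : 0 < c) (hd : 0 < d) (ht : 0 < t)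
    (hF : Tendsto (fun x => F x / x ^ d) (nhdsWithin 0 (Ioi 0)) (nhds c)) :
    Tendsto (fun ρ => Real.log (F (t / ρ)) / Real.log ρ) atTop (nhds (-d)) := by
  have hg := tendsto_ratio_comp F c d t ht hF
  have hlogρ : Tendsto Real.log atTop atTop := Real.tendsto_log_atTop
  have h2 : Tendsto (fun ρ => Real.log (F (t/ρ) / (t/ρ) ^ d) / Real.log ρ) atTop (nhds 0) :=
    (hg.log hc.ne').div_atTop hlogρ
  have h3 : Tendsto (fun ρ : ℝ => Real.log t / Real.log ρ) atTop (nhds 0) :=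
    tendsto_const_nhds.div_atTop hlogρ
  have key : Tendsto (fun ρ => Real.log (F (t/ρ) / (t/ρ) ^ d) / Real.log ρ
      + d * (Real.log t / Real.log ρ) - d) atTop (nhds (-d)) := by
    have := (h2.add (h3.const_mul d)).sub_const d
    simpa using this
  apply key.congr'
  filter_upwards [hg.eventually (eventually_gt_nhds hc), eventually_gt_atTop (1 : ℝ)]
    with ρ hgρ hρ1
  have hρ0 : (0:ℝ) < ρ := lt_trans one_pos hρ1
  have htρ : 0 < t / ρ := div_pos ht hρ0
  have hpow : (0:ℝ) < (t / ρ) ^ d := Real.rpow_pos_of_pos htρ d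
  have hFpos : 0 < F (t / ρ) := by
    have : F (t / ρ) = (F (t / ρ) / (t / ρ) ^ d) * (t / ρ) ^ d :=
      (div_mul_cancel₀ _ hpow.ne').symm
    rw [this]; exact mul_pos hgρ hpow
  have hlρ : Real.log ρ ≠ 0 := (Real.log_pos hρ1).ne'
  have hlog : Real.log (F (t/ρ) / (t/ρ) ^ d) =
      Real.log (F (t/ρ)) - d * (Real.log t - Real.log ρ) := by
    rw [Real.log_div hFpos.ne' hpow.ne', Real.log_rpow htρ,
      Real.log_div ht.ne' hρ0.ne']
  rw [hlog]
  field_simp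
  ring

theorem harq_ir_diversity_order
    {Ω : Type*} [MeasurableSpace Ω] (μ : Measure Ω) [IsProbabilityMeasure μ]
    (K : ℕ) (hK : 1 ≤ K) (X : Fin K → Ω → ℝ)
    (F : ℝ → ℝ) (c d R : ℝ) (hc : 0 < c) (hd : 0 < d) (hR : 0 < R)
    (hmeas : ∀ k, Measurable (X k))
    (hindep : iIndepFun X μ)
    (hXnn : ∀ k ω, 0 ≤ X k ω)
    (hcdf : ∀ k x, (μ {ω | X k ω ≤ x}).toReal = F x)
    (hF : Tendsto (fun x => F x / x ^ d) (nhdsWithin 0 (Ioi 0)) (nhds c)) :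
    Tendsto
      (fun ρ => Real.log ((μ {ω | ∏ k, (1 + ρ * X k ω) < (2 : ℝ) ^ R}).toReal)
        / Real.log ρ)
      atTop (nhds (-((K : ℝ) * d))) := by
  have hK0 : (K : ℝ) ≠ 0 := Nat.cast_ne_zero.mpr (by omega)
  haveI : Nonempty (Fin K) := ⟨⟨0, by omega⟩⟩
  have hq : (1:ℝ) < (2:ℝ) ^ (R / K) := by
    rw [Real.one_lt_rpow_iff_of_pos (by norm_num)]
    exact Or.inl ⟨by norm_num, div_pos hR (Nat.cast_pos.mpr (by omega))⟩
  have h2R : (1:ℝ) < (2:ℝ) ^ R := by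
    rw [Real.one_lt_rpow_iff_of_pos (by norm_num)]
    exact Or.inl ⟨by norm_num, hR⟩
  set a : ℝ := (2:ℝ) ^ R - 1 with ha_def
  set b : ℝ := ((2:ℝ) ^ (R / K) - 1) / 2 with hb_def
  have ha : 0 < a := by simp [ha_def]; linarith
  have hb : 0 < b := by simp [hb_def]; linarith
  -- product of identical CDF values
  have hprod : ∀ t : ℝ, (μ (⋂ k, {ω | X k ω ≤ t})).toReal = F t ^ K := by
    intro t
    have h := hindep.meas_iInter (s := fun k => {ω | X k ω ≤ t})
      (fun k => ⟨Iic t, measurableSet_Iic, rfl⟩)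
    rw [h, ENNReal.toReal_prod]
    simp [hcdf]
  -- limits of bounding functions
  have hL : Tendsto (fun ρ => (K:ℝ) * (Real.log (F (b/ρ)) / Real.log ρ)) atTop
      (nhds (-((K:ℝ) * d))) := by
    have := (log_cdf_limit F c d b hc hd hb hF).const_mul (K:ℝ)
    simpa [mul_neg] using this
  have hU : Tendsto (fun ρ => (K:ℝ) * (Real.log (F (a/ρ)) / Real.log ρ)) atTop
      (nhds (-((K:ℝ) * d))) := by
    have := (log_cdf_limit F c d a hc hd ha hF).const_mul (K:ℝ)
    simpa [mul_neg] using this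
  have hbnd : ∀ᶠ ρ : ℝ in atTop,
      (K:ℝ) * (Real.log (F (b/ρ)) / Real.log ρ) ≤
        Real.log ((μ {ω | ∏ k, (1 + ρ * X k ω) < (2 : ℝ) ^ R}).toReal) / Real.log ρ ∧
      Real.log ((μ {ω | ∏ k, (1 + ρ * X k ω) < (2 : ℝ) ^ R}).toReal) / Real.log ρ ≤
        (K:ℝ) * (Real.log (F (a/ρ)) / Real.log ρ) := by
    filter_upwards [eventually_gt_atTop (1 : ℝ),
      F_eventually_pos F c d b hc hb hF, F_eventually_pos F c d a hc ha hF]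
      with ρ hρ1 hFb hFa
    have hρ0 : (0:ℝ) < ρ := lt_trans one_pos hρ1
    have hlogρ : 0 < Real.log ρ := Real.log_pos hρ1
    set A : Set Ω := {ω | ∏ k, (1 + ρ * X k ω) < (2 : ℝ) ^ R} with hA_def
    -- lower bound: ⋂ {X k ≤ b/ρ} ⊆ A
    have hlow : F (b/ρ) ^ K ≤ (μ A).toReal := by
      rw [← hprod (b/ρ)]
      apply ENNReal.toReal_mono (measure_ne_top μ _)
      apply measure_mono
      intro ω hω
      simp only [mem_iInter, mem_setOf_eq] at hω
      show ∏ k, (1 + ρ * X k ω) < (2 : ℝ) ^ R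
      have hlt : ∀ k : Fin K, (1 + ρ * X k ω) < (2:ℝ) ^ (R / K) := by
        intro k
        have h1 : ρ * X k ω ≤ ρ * (b / ρ) :=
          mul_le_mul_of_nonneg_left (hω k) hρ0.le
        have h2 : ρ * (b / ρ) = b := by field_simp
        have h3 : 1 + b < (2:ℝ) ^ (R / K) := by
          rw [hb_def]; linarith
        rw [h2] at h1
        linarith
      calc ∏ k, (1 + ρ * X k ω) < ∏ _k : Fin K, (2:ℝ) ^ (R / K) := by
            apply Finset.prod_lt_prod_of_nonempty
            · intro i _
              have := mul_nonneg hρ0.le (hXnn i ω)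
              linarith
            · intro i _; exact hlt i
            · exact Finset.univ_nonempty (α := Fin K)
        _ = (2:ℝ) ^ R := by
            rw [Finset.prod_const, Finset.card_univ, Fintype.card_fin,
              ← Real.rpow_natCast ((2:ℝ) ^ (R/K)) K,
              ← Real.rpow_mul (by norm_num : (0:ℝ) ≤ 2),
              div_mul_cancel₀ R hK0]
    -- upper bound: A ⊆ ⋂ {X k ≤ a/ρ}
    have hup : (μ A).toReal ≤ F (a/ρ) ^ K := by
      rw [← hprod (a/ρ)]
      apply ENNReal.toReal_mono (measure_ne_top μ _)
      apply measure_mono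
      intro ω hω
      simp only [hA_def, mem_setOf_eq] at hω
      simp only [mem_iInter, mem_setOf_eq]
      intro j
      set f : Fin K → ℝ := fun k => 1 + ρ * X k ω with hf_def
      have h1 : ∀ k, (1:ℝ) ≤ f k := fun k =>
        le_add_of_nonneg_right (mul_nonneg hρ0.le (hXnn k ω))
      have hone : (1:ℝ) ≤ ∏ k ∈ Finset.univ.erase j, f k := by
        have := Finset.prod_le_prod (f := fun _ => (1:ℝ)) (g := f)
          (s := Finset.univ.erase j) (fun i _ => zero_le_one) (fun i _ => h1 i)
        simpa using this
      have hj : f j ≤ ∏ k, f k := by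
        rw [← Finset.mul_prod_erase Finset.univ f (Finset.mem_univ j)]
        exact le_mul_of_one_le_right (le_trans zero_le_one (h1 j)) hone
      have hfj : f j < (2:ℝ) ^ R := lt_of_le_of_lt hj hω
      have hxa : X j ω * ρ ≤ a := by
        have : ρ * X j ω < a := by
          simp only [hf_def] at hfj; rw [ha_def]; linarith
        rw [mul_comm]; linarith
      exact (le_div_iff₀ hρ0).2 hxa
    have hP : 0 < (μ A).toReal := lt_of_lt_of_le (pow_pos hFb K) hlow
    constructor
    · rw [← mul_div_assoc, ← Real.log_pow]
      exact (div_le_div_iff_of_pos_right hlogρ).2 (Real.log_le_log (pow_pos hFb K) hlow)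
    · rw [← mul_div_assoc, ← Real.log_pow]
      exact (div_le_div_iff_of_pos_right hlogρ).2 (Real.log_le_log hP hup)
  exact tendsto_of_tendsto_of_tendsto_of_le_of_le' hL hU
    (hbnd.mono fun ρ h => h.1) (hbnd.mono fun ρ h => h.2)
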